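/- arXiv:2101.12708 — 9 statements merged into one kernel-verified Lean document; each statement's English description precedes it below -/
import Mathlib

section
/- (Lemma 1: projection of the P-split representation) For every x ∈ ℝⁿ the following are equivalent: (i) x ∈ X and there exist real numbers α^l_s (for l ∈ D, s ∈ {1,…,P}) such that Σ_{i∈I_s} h_{i,l}(x_i) ≤ α^l_s for all l ∈ D and all s ∈ {1,…,P}, and there exists l ∈ D with Σ_{s=1}^P α^l_s ≤ b_l and αlo^l_s ≤ α^l_s ≤ αhi^l_s for all s ∈ {1,…,P}; (ii) x ∈ F. In other words, the feasible set of the P-split representation projected onto the x-space equals the feasible set of the original disjunction. -/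
/-- **Lemma 1 (projection of the P-split representation).**
The feasible set of the P-split representation projected onto the x-space equals
the feasible set of the original disjunction. -/
theorem psplit_representation_projection
    {n : ℕ} (hn : 1 ≤ n)
    {D : Type} [Fintype D] [Nonempty D]
    (b : D → ℝ) (h : Fin n → D → ℝ → ℝ)
    (hconv : ∀ i l, ConvexOn ℝ Set.univ (h i l))
    (X : Set (Fin n → ℝ)) (hXne : X.Nonempty) (hXconv : Convex ℝ X)
    (hXcomp : IsCompact X)
    (hdisjne : ∀ l : D, ∃ x ∈ X, ∑ i, h i l (x i) ≤ b l)
    {P : ℕ} (I : Fin P → Finset (Fin n))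
    (hIne : ∀ s, (I s).Nonempty)
    (hpart : ∀ i : Fin n, ∃! s, i ∈ I s)
    (αlo αhi : D → Fin P → ℝ)
    (hlo : ∀ l s, IsLeast ((fun x => ∑ i ∈ I s, h i l (x i)) '' X) (αlo l s))
    (hhi : ∀ l s, IsGreatest ((fun x => ∑ i ∈ I s, h i l (x i)) '' X) (αhi l s))
    (x : Fin n → ℝ) :
    (x ∈ X ∧ ∃ α : D → Fin P → ℝ,
        (∀ l s, ∑ i ∈ I s, h i l (x i) ≤ α l s) ∧
        ∃ l : D, (∑ s, α l s ≤ b l) ∧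
          ∀ s, αlo l s ≤ α l s ∧ α l s ≤ αhi l s)
      ↔ (x ∈ X ∧ ∃ l : D, ∑ i, h i l (x i) ≤ b l) := by
  have key : ∀ (y : Fin n → ℝ) (l : D),
      ∑ s, ∑ i ∈ I s, h i l (y i) = ∑ i, h i l (y i) := by
    intro y l
    rw [← Finset.sum_biUnion]
    · congr 1
      apply Finset.eq_univ_iff_forall.mpr
      intro i
      obtain ⟨s, hs, -⟩ := hpart i
      exact Finset.mem_biUnion.mpr ⟨s, Finset.mem_univ s, hs⟩
    · intro s _ t _ hst
      refine Finset.disjoint_left.mpr fun i hi hi' => hst ?_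
      obtain ⟨s', -, huniq⟩ := hpart i
      rw [huniq s hi, huniq t hi']
  constructor
  · rintro ⟨hx, α, hα, l, hsum, -⟩
    refine ⟨hx, l, ?_⟩
    calc ∑ i, h i l (x i) = ∑ s, ∑ i ∈ I s, h i l (x i) := (key x l).symm
      _ ≤ ∑ s, α l s := Finset.sum_le_sum fun s _ => hα l s
      _ ≤ b l := hsum
  · rintro ⟨hx, l, hl⟩
    refine ⟨hx, fun l' s => ∑ i ∈ I s, h i l' (x i), fun l' s => le_refl _,
      l, by rw [key x l]; exact hl, fun s => ⟨?_, ?_⟩⟩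
    · exact (hlo l s).2 ⟨x, hx, rfl⟩
    · exact (hhi l s).2 ⟨x, hx, rfl⟩
end

section
/- (Proposition 1: correctness of the P-split formulation) For every x ∈ ℝⁿ the following are equivalent: (i) there exist α = (α^l_s), ν = (ν^l_{s,d}) and λ ∈ {0,1}^D such that (x, α, ν, λ) satisfies the P-split formulation; (ii) x ∈ F. That is, the set of feasible x-variables of the P-split formulation equals the feasible set of the original disjunction. -/
/-- The constraint system of the P-split formulation (extended convex-hull
formulation of the P-split representation). -/
def PSplitSystem {n : ℕ} {D : Type} [Fintype D] {P : ℕ}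
    (X : Set (Fin n → ℝ)) (b : D → ℝ) (h : Fin n → D → ℝ → ℝ)
    (I : Fin P → Finset (Fin n)) (αlo αhi : D → Fin P → ℝ)
    (x : Fin n → ℝ) (α : D → Fin P → ℝ) (ν : D → Fin P → D → ℝ)
    (lam : D → ℝ) : Prop :=
  x ∈ X ∧
  (∀ l s, α l s = ∑ d, ν l s d) ∧
  (∀ l, ∑ s, ν l s l ≤ b l * lam l) ∧
  (∀ l s d, αlo l s * lam d ≤ ν l s d ∧ ν l s d ≤ αhi l s * lam d) ∧
  (∀ l s, ∑ i ∈ I s, h i l (x i) ≤ α l s) ∧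
  (∑ l, lam l = 1)

/-- **Proposition 1 (correctness of the P-split formulation).**
The set of feasible x-variables of the P-split formulation (with binary λ)
equals the feasible set of the original disjunction. -/
theorem psplit_formulation_correct
    {n : ℕ} (hn : 1 ≤ n)
    {D : Type} [Fintype D] [Nonempty D]
    (b : D → ℝ) (h : Fin n → D → ℝ → ℝ)
    (hconv : ∀ i l, ConvexOn ℝ Set.univ (h i l))
    (X : Set (Fin n → ℝ)) (hXne : X.Nonempty) (hXconv : Convex ℝ X)
    (hXcomp : IsCompact X)
    (hdisjne : ∀ l : D, ∃ x ∈ X, ∑ i, h i l (x i) ≤ b l)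
    {P : ℕ} (I : Fin P → Finset (Fin n))
    (hIne : ∀ s, (I s).Nonempty)
    (hpart : ∀ i : Fin n, ∃! s, i ∈ I s)
    (αlo αhi : D → Fin P → ℝ)
    (hlo : ∀ l s, IsLeast ((fun x => ∑ i ∈ I s, h i l (x i)) '' X) (αlo l s))
    (hhi : ∀ l s, IsGreatest ((fun x => ∑ i ∈ I s, h i l (x i)) '' X) (αhi l s))
    (x : Fin n → ℝ) :
    (∃ (α : D → Fin P → ℝ) (ν : D → Fin P → D → ℝ) (lam : D → ℝ),
        (∀ l, lam l = 0 ∨ lam l = 1) ∧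
        PSplitSystem X b h I αlo αhi x α ν lam)
      ↔ (x ∈ X ∧ ∃ l : D, ∑ i, h i l (x i) ≤ b l) :=  by
  classical
  have key : ∀ f : Fin n → ℝ, ∑ s, ∑ i ∈ I s, f i = ∑ i, f i := by
    intro f
    choose σ hσ hσu using hpart
    have hI : ∀ s, I s = Finset.univ.filter (fun i => σ i = s) := by
      intro s; ext i
      simp only [Finset.mem_filter, Finset.mem_univ, true_and]
      exact ⟨fun hi => (hσu i s hi).symm, fun hi => hi ▸ hσ i⟩
    simp_rw [hI]
    exact Finset.sum_fiberwise _ _ _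
  constructor
  · rintro ⟨α, ν, lam, hbin, hxX, hα, hbl, hbd, hαh, hsum⟩
    refine ⟨hxX, ?_⟩
    have hnonneg : ∀ l, 0 ≤ lam l := fun l => by rcases hbin l with h'|h' <;> simp [h']
    obtain ⟨l₀, hl₀⟩ : ∃ l, lam l = 1 := by
      by_contra hc
      push_neg at hc
      have hz : ∀ l, lam l = 0 := fun l => (hbin l).resolve_right (hc l)
      simp [hz] at hsum
    have hzero : ∀ d, d ≠ l₀ → lam d = 0 := by
      intro d hd
      have h1 : lam l₀ + ∑ l ∈ Finset.univ.erase l₀, lam l = 1 := by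
        rw [Finset.add_sum_erase Finset.univ lam (Finset.mem_univ l₀)]; exact hsum
      have h2 : ∑ l ∈ Finset.univ.erase l₀, lam l = 0 := by linarith
      exact (Finset.sum_eq_zero_iff_of_nonneg (fun i _ => hnonneg i)).mp h2 d
        (Finset.mem_erase.mpr ⟨hd, Finset.mem_univ d⟩)
    have hν0 : ∀ l s d, d ≠ l₀ → ν l s d = 0 := by
      intro l s d hd
      have h1 := (hbd l s d).1
      have h2 := (hbd l s d).2
      rw [hzero d hd, mul_zero] at h1 h2
      linarith
    refine ⟨l₀, ?_⟩
    have hαν : ∀ s, α l₀ s = ν l₀ s l₀ := by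
      intro s
      rw [hα l₀ s, Finset.sum_eq_single l₀ (fun d _ hd => hν0 l₀ s d hd)
        (fun hm => absurd (Finset.mem_univ l₀) hm)]
    calc ∑ i, h i l₀ (x i) = ∑ s, ∑ i ∈ I s, h i l₀ (x i) := (key _).symm
      _ ≤ ∑ s, α l₀ s := Finset.sum_le_sum (fun s _ => hαh l₀ s)
      _ = ∑ s, ν l₀ s l₀ := Finset.sum_congr rfl (fun s _ => hαν s)
      _ ≤ b l₀ * lam l₀ := hbl l₀
      _ = b l₀ := by rw [hl₀, mul_one]
  · rintro ⟨hxX, l₀, hl₀⟩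
    refine ⟨fun l s => ∑ i ∈ I s, h i l (x i),
            fun l s d => if d = l₀ then ∑ i ∈ I s, h i l (x i) else 0,
            fun d => if d = l₀ then 1 else 0,
            fun l => by by_cases hl : l = l₀ <;> simp [hl],
            hxX, ?_, ?_, ?_, fun l s => le_refl _, ?_⟩
    · intro l s
      simp [Finset.sum_ite_eq']
    · intro l
      by_cases hl : l = l₀
      · subst hl
        simp only [eq_self_iff_true, if_true, mul_one]
        rw [key]
        exact hl₀
      · simp [hl]
    · intro l s d
      by_cases hd : d = l₀
      · subst hd
        simp only [eq_self_iff_true, if_true, mul_one]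
        exact ⟨(hlo l s).2 ⟨x, hxX, rfl⟩, (hhi l s).2 ⟨x, hxX, rfl⟩⟩
      · simp [hd]
    · simp [Finset.sum_ite_eq']
end

section
/- (Supporting claim, forward direction of Proposition 1) Suppose (x, α, ν, λ) satisfies the P-split formulation with binary λ, and λ_d = 1 for some d ∈ D. Then ν^l_{s,d'} = 0 for every l ∈ D, every s ∈ {1,…,P} and every d' ∈ D with d' ≠ d, so that α^d_s = ν^d_{s,d} for all s; consequently Σ_{s=1}^P α^d_s ≤ b_d and x satisfies disjunct d, i.e., Σ_{i=1}^n h_{i,d}(x_i) ≤ b_d. -/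
/-- **Forward direction of Proposition 1.** If (x, α, ν, λ) satisfies the
P-split formulation with binary λ and λ_d = 1, then all disaggregated
variables ν^l_{s,d'} with d' ≠ d vanish, α^d_s = ν^d_{s,d}, Σ_s α^d_s ≤ b_d,
and x satisfies disjunct d. -/
theorem psplit_binary_forward
    {n : ℕ} (hn : 1 ≤ n)
    {D : Type} [Fintype D] [Nonempty D] [DecidableEq D]
    (b : D → ℝ) (h : Fin n → D → ℝ → ℝ)
    (hconv : ∀ i l, ConvexOn ℝ Set.univ (h i l))
    (X : Set (Fin n → ℝ)) (hXne : X.Nonempty) (hXconv : Convex ℝ X)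
    (hXcomp : IsCompact X)
    {P : ℕ} (I : Fin P → Finset (Fin n))
    (hIne : ∀ s, (I s).Nonempty)
    (hpart : ∀ i : Fin n, ∃! s, i ∈ I s)
    (αlo αhi : D → Fin P → ℝ)
    (hlo : ∀ l s, IsLeast ((fun x => ∑ i ∈ I s, h i l (x i)) '' X) (αlo l s))
    (hhi : ∀ l s, IsGreatest ((fun x => ∑ i ∈ I s, h i l (x i)) '' X) (αhi l s))
    (x : Fin n → ℝ) (α : D → Fin P → ℝ) (ν : D → Fin P → D → ℝ)
    (lam : D → ℝ)
    (hsys : PSplitSystem X b h I αlo αhi x α ν lam)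
    (hbin : ∀ l, lam l = 0 ∨ lam l = 1)
    (d : D) (hd : lam d = 1) :
    (∀ (l : D) (s : Fin P) (d' : D), d' ≠ d → ν l s d' = 0) ∧
    (∀ s : Fin P, α d s = ν d s d) ∧
    (∑ s, α d s ≤ b d) ∧
    (∑ i, h i d (x i) ≤ b d) := by

  obtain ⟨hx, hα, hν, hbd, hineq, hsum⟩ := hsys
  have hlamz : ∀ d' : D, d' ≠ d → lam d' = 0 := by
    intro d' hne
    rcases hbin d' with h0 | h1
    · exact h0
    · exfalso
      have hnn : ∀ l : D, 0 ≤ lam l := by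
        intro l; rcases hbin l with h0 | h0 <;> rw [h0] <;> norm_num
      have : (2:ℝ) ≤ ∑ l, lam l := by
        calc (2:ℝ) = lam d' + lam d := by rw [h1, hd]; norm_num
        _ ≤ ∑ l, lam l := by
          have := Finset.add_sum_erase Finset.univ lam (Finset.mem_univ d)
          rw [← this]
          have hd'mem : d' ∈ Finset.univ.erase d := Finset.mem_erase.mpr ⟨hne, Finset.mem_univ d'⟩
          have := Finset.single_le_sum (f := lam) (fun l _ => hnn l) hd'mem
          linarith
      rw [hsum] at this; linarith
  have hvz : ∀ (l : D) (s : Fin P) (d' : D), d' ≠ d → ν l s d' = 0 := by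
    intro l s d' hne
    have := hbd l s d'
    rw [hlamz d' hne] at this
    simp at this
    linarith [this.1, this.2]
  have hαν : ∀ s : Fin P, α d s = ν d s d := by
    intro s
    rw [hα d s]
    rw [Finset.sum_eq_single d]
    · intro d' _ hne; exact hvz d s d' hne
    · intro hmem; exact absurd (Finset.mem_univ d) hmem
  have hsum1 : ∑ s, α d s ≤ b d := by
    calc ∑ s, α d s = ∑ s, ν d s d := by simp [hαν]
    _ ≤ b d * lam d := hν d
    _ = b d := by rw [hd, mul_one]
  refine ⟨hvz, hαν, hsum1, ?_⟩
  have hpartsum : ∑ i, h i d (x i) = ∑ s, ∑ i ∈ I s, h i d (x i) := by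
    have : ∀ s : Fin P, ∑ i ∈ I s, h i d (x i)
        = ∑ i : Fin n, if i ∈ I s then h i d (x i) else 0 := by
      intro s; rw [Finset.sum_ite_mem]; simp
    simp_rw [this]
    rw [Finset.sum_comm]
    apply Finset.sum_congr rfl
    intro i _
    obtain ⟨s, hs, huniq⟩ := hpart i
    rw [Finset.sum_eq_single s]
    · simp [hs]
    · intro s' _ hne
      have : i ∉ I s' := fun hmem => hne (huniq s' hmem)
      simp [this]
    · intro hmem; exact absurd (Finset.mem_univ s) hmem
  rw [hpartsum]
  calc ∑ s, ∑ i ∈ I s, h i d (x i) ≤ ∑ s, α d s :=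
        Finset.sum_le_sum (fun s _ => hineq d s)
    _ ≤ b d := hsum1
end

section
/- (Supporting claim, backward direction of Proposition 1) Suppose x ∈ X satisfies disjunct d ∈ D, i.e., Σ_{i=1}^n h_{i,d}(x_i) ≤ b_d. Define λ_d = 1 and λ_l = 0 for l ≠ d; α^l_s = Σ_{i∈I_s} h_{i,l}(x_i) for all l ∈ D, s ∈ {1,…,P}; ν^l_{s,d} = α^l_s and ν^l_{s,d'} = 0 for d' ≠ d. Then (x, α, ν, λ) satisfies all constraints of the P-split formulation. -/
/-- **Backward direction of Proposition 1.** If x ∈ X satisfies disjunct d,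
then the canonical assignment λ_d = 1 (0 elsewhere), α^l_s = Σ_{i∈I_s} h_{i,l}(x_i),
ν^l_{s,d} = α^l_s (0 for other disjunct indices) satisfies all constraints of the
P-split formulation. -/
theorem psplit_binary_backward
    {n : ℕ} (hn : 1 ≤ n)
    {D : Type} [Fintype D] [Nonempty D] [DecidableEq D]
    (b : D → ℝ) (h : Fin n → D → ℝ → ℝ)
    (hconv : ∀ i l, ConvexOn ℝ Set.univ (h i l))
    (X : Set (Fin n → ℝ)) (hXne : X.Nonempty) (hXconv : Convex ℝ X)
    (hXcomp : IsCompact X)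
    {P : ℕ} (I : Fin P → Finset (Fin n))
    (hIne : ∀ s, (I s).Nonempty)
    (hpart : ∀ i : Fin n, ∃! s, i ∈ I s)
    (αlo αhi : D → Fin P → ℝ)
    (hlo : ∀ l s, IsLeast ((fun x => ∑ i ∈ I s, h i l (x i)) '' X) (αlo l s))
    (hhi : ∀ l s, IsGreatest ((fun x => ∑ i ∈ I s, h i l (x i)) '' X) (αhi l s))
    (x : Fin n → ℝ) (hx : x ∈ X)
    (d : D) (hd : ∑ i, h i d (x i) ≤ b d) :
    PSplitSystem X b h I αlo αhi x
      (fun l s => ∑ i ∈ I s, h i l (x i))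
      (fun l s d' => if d' = d then ∑ i ∈ I s, h i l (x i) else 0)
      (fun l => if l = d then (1 : ℝ) else 0) ∧
    (∀ l : D, (if l = d then (1 : ℝ) else 0) = 0 ∨
      (if l = d then (1 : ℝ) else 0) = 1) := by

  have hpartsum : ∀ (f : Fin n → ℝ), ∑ s, ∑ i ∈ I s, f i = ∑ i, f i := by
    intro f
    have : ∀ s, ∑ i ∈ I s, f i = ∑ i, if i ∈ I s then f i else 0 := by
      intro s
      rw [Finset.sum_ite_mem, Finset.univ_inter]
    simp_rw [this]
    rw [Finset.sum_comm]
    refine Finset.sum_congr rfl fun i _ => ?_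
    obtain ⟨s, hs, huniq⟩ := hpart i
    rw [Finset.sum_eq_single s]
    · simp [hs]
    · intro t _ ht
      exact if_neg fun hm => ht (huniq t hm)
    · simp [hs]
  refine ⟨⟨hx, ?_, ?_, ?_, fun l s => le_refl _, ?_⟩, ?_⟩
  · intro l s
    rw [Finset.sum_ite_eq' Finset.univ d]
    simp
  · intro l
    by_cases hl : l = d
    · subst hl
      simp only [if_pos rfl, mul_one, if_true]
      rw [hpartsum fun i => h i l (x i)]
      exact hd
    · simp only [if_neg hl, mul_zero]
      simp
  · intro l s d'
    by_cases hd' : d' = d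
    · subst hd'
      simp only [if_pos rfl, mul_one, if_true]
      exact ⟨(hlo l s).2 ⟨x, hx, rfl⟩, (hhi l s).2 ⟨x, hx, rfl⟩⟩
    · simp [hd']
  · rw [Finset.sum_ite_eq' Finset.univ d]
    simp
  · intro l
    by_cases hl : l = d <;> simp [hl]
end

section
/- (Theorem 1: the 1-split formulation is equivalent to the big-M formulation) Consider the 1-split formulation, i.e., P = 1 with the single block I_1 = {1,…,n}, and write αlo^l = min_{x∈X} Σ_{i=1}^n h_{i,l}(x_i), αhi^l = max_{x∈X} Σ_{i=1}^n h_{i,l}(x_i). Assume αlo^l ≤ b_l ≤ αhi^l for every l ∈ D. Then for every x ∈ ℝⁿ and every λ ∈ [0,1]^D with Σ_{l∈D} λ_l = 1, the following are equivalent: (i) there exist α ∈ ℝ^D and ν = (ν^l_d)_{l,d∈D} such that x ∈ X, α^l = Σ_{d∈D} ν^l_d, ν^l_l ≤ b_l·λ_l, αlo^l·λ_d ≤ ν^l_d ≤ αhi^l·λ_d for all l, d ∈ D, and Σ_{i=1}^n h_{i,l}(x_i) ≤ α^l for all l ∈ D; (ii) x ∈ X and Σ_{i=1}^n h_{i,l}(x_i)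 ≤ b_l + M^l·(1 − λ_l) for every l ∈ D, where M^l = αhi^l − b_l. Hence the continuous relaxation of the 1-split formulation has the same projection onto (x, λ) as the big-M formulation with coefficients M^l = αhi^l − b_l. -/
/-- **Theorem 1 (the 1-split formulation is equivalent to the big-M formulation).**
For the 1-split (P = 1, I₁ = {1,…,n}), under αlo^l ≤ b_l ≤ αhi^l, the continuous
relaxation of the 1-split formulation has the same projection onto (x, λ) as the
big-M formulation with coefficients M^l = αhi^l − b_l. -/
theorem one_split_equiv_bigM
    {n : ℕ} (hn : 1 ≤ n)
    {D : Type} [Fintype D] [Nonempty D]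
    (b : D → ℝ) (h : Fin n → D → ℝ → ℝ)
    (hconv : ∀ i l, ConvexOn ℝ Set.univ (h i l))
    (X : Set (Fin n → ℝ)) (hXne : X.Nonempty) (hXconv : Convex ℝ X)
    (hXcomp : IsCompact X)
    (αlo αhi : D → ℝ)
    (hlo : ∀ l, IsLeast ((fun x => ∑ i, h i l (x i)) '' X) (αlo l))
    (hhi : ∀ l, IsGreatest ((fun x => ∑ i, h i l (x i)) '' X) (αhi l))
    (hb : ∀ l, αlo l ≤ b l ∧ b l ≤ αhi l)
    (x : Fin n → ℝ) (lam : D → ℝ)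
    (hlam : ∀ l, 0 ≤ lam l ∧ lam l ≤ 1) (hlam1 : ∑ l, lam l = 1) :
    (∃ (α : D → ℝ) (ν : D → D → ℝ),
        x ∈ X ∧
        (∀ l, α l = ∑ d, ν l d) ∧
        (∀ l, ν l l ≤ b l * lam l) ∧
        (∀ l d, αlo l * lam d ≤ ν l d ∧ ν l d ≤ αhi l * lam d) ∧
        (∀ l, ∑ i, h i l (x i) ≤ α l))
      ↔ (x ∈ X ∧ ∀ l, ∑ i, h i l (x i) ≤ b l + (αhi l - b l) * (1 - lam l)) := by
  classical
  constructor
  · rintro ⟨α, ν, hx, hα, hνl, hνbd, hh⟩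
    refine ⟨hx, fun l => ?_⟩
    have h3 : ∑ d ∈ Finset.univ.erase l, lam d = 1 - lam l := by
      have h4 := Finset.add_sum_erase Finset.univ lam (Finset.mem_univ l)
      rw [hlam1] at h4
      linarith
    have h1 : α l = ν l l + ∑ d ∈ Finset.univ.erase l, ν l d := by
      rw [hα l, ← Finset.add_sum_erase _ _ (Finset.mem_univ l)]
    have h2 : ∑ d ∈ Finset.univ.erase l, ν l d ≤ αhi l * (1 - lam l) := by
      calc ∑ d ∈ Finset.univ.erase l, ν l d
          ≤ ∑ d ∈ Finset.univ.erase l, αhi l * lam d :=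
            Finset.sum_le_sum fun d _ => (hνbd l d).2
        _ = αhi l * (1 - lam l) := by rw [← Finset.mul_sum, h3]
    have heq : b l + (αhi l - b l) * (1 - lam l) = b l * lam l + αhi l * (1 - lam l) := by
      ring
    have := hh l
    have := hνl l
    linarith
  · rintro ⟨hx, hbig⟩
    have hle : ∀ l, αlo l ≤ αhi l := fun l => (hb l).1.trans (hb l).2
    refine ⟨fun l => b l * lam l + αhi l * (1 - lam l),
      fun l d => if d = l then b l * lam l else αhi l * lam d, hx, ?_, ?_, ?_, ?_⟩
    · intro l
      show b l * lam l + αhi l * (1 - lam l) = _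
      rw [← Finset.add_sum_erase _ _ (Finset.mem_univ l)]
      simp only [if_pos rfl]
      congr 1
      rw [Finset.sum_congr rfl (fun d hd => if_neg (Finset.ne_of_mem_erase hd)),
        ← Finset.mul_sum]
      congr 1
      have h4 := Finset.add_sum_erase Finset.univ lam (Finset.mem_univ l)
      rw [hlam1] at h4
      linarith
    · intro l; simp
    · intro l d
      by_cases hdl : d = l
      · subst hdl
        simp only [if_pos rfl]
        exact ⟨mul_le_mul_of_nonneg_right (hb d).1 (hlam d).1,
          mul_le_mul_of_nonneg_right (hb d).2 (hlam d).1⟩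
      · simp only [if_neg hdl]
        exact ⟨mul_le_mul_of_nonneg_right (hle l) (hlam d).1, le_refl _⟩
    · intro l
      show _ ≤ b l * lam l + αhi l * (1 - lam l)
      have := hbig l
      have heq : b l + (αhi l - b l) * (1 - lam l) = b l * lam l + αhi l * (1 - lam l) := by
        ring
      linarith
end

section
/- (Supporting claim in the proof of Theorem 1: elimination of the disaggregated variables) Assume αlo^l ≤ b_l ≤ αhi^l for every l ∈ D, where αlo^l = min_{x∈X} Σ_{i=1}^n h_{i,l}(x_i) and αhi^l = max_{x∈X} Σ_{i=1}^n h_{i,l}(x_i). Then for every x ∈ ℝⁿ, α ∈ ℝ^D and λ ∈ [0,1]^D with Σ_{l∈D} λ_l = 1, the following are equivalent: (i) x ∈ X, Σ_{i=1}^n h_{i,l}(x_i) ≤ α^l for all l ∈ D, and there exists ν = (ν^l_d)_{l,d∈D} with α^l = Σ_{d∈D} ν^l_d, ν^l_l ≤ b_l·λ_l, and αlo^l·λ_d ≤ ν^l_d ≤ αhi^l·λ_d for all l, d ∈ D; (ii) x ∈ X, Σ_{i=1}^n h_{i,l}(x_i) ≤ α^l and α^l ≤ b_l·λ_l + αhi^l·(1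 − λ_l) for all l ∈ D. -/
private lemma one_split_aux (a c M t : ℝ) (ht0 : 0 ≤ t) (ht1 : t ≤ 1)
    (hac : a ≤ c) (hcM : c ≤ M) : a ≤ a + t * (c - a) ∧ a + t * (c - a) ≤ M := by
  constructor <;> nlinarith

/-- **Supporting claim in the proof of Theorem 1 (elimination of the
disaggregated variables).** For λ in the continuous relaxation, the
disaggregated variables ν of the 1-split formulation can be projected out:
their existence is equivalent to α^l ≤ b_l·λ_l + αhi^l·(1 − λ_l). -/
theorem one_split_eliminate_disaggregated
    {n : ℕ} (hn : 1 ≤ n)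
    {D : Type} [Fintype D] [Nonempty D]
    (b : D → ℝ) (h : Fin n → D → ℝ → ℝ)
    (hconv : ∀ i l, ConvexOn ℝ Set.univ (h i l))
    (X : Set (Fin n → ℝ)) (hXne : X.Nonempty) (hXconv : Convex ℝ X)
    (hXcomp : IsCompact X)
    (αlo αhi : D → ℝ)
    (hlo : ∀ l, IsLeast ((fun x => ∑ i, h i l (x i)) '' X) (αlo l))
    (hhi : ∀ l, IsGreatest ((fun x => ∑ i, h i l (x i)) '' X) (αhi l))
    (hb : ∀ l, αlo l ≤ b l ∧ b l ≤ αhi l)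
    (x : Fin n → ℝ) (α : D → ℝ) (lam : D → ℝ)
    (hlam : ∀ l, 0 ≤ lam l ∧ lam l ≤ 1) (hlam1 : ∑ l, lam l = 1) :
    (x ∈ X ∧ (∀ l, ∑ i, h i l (x i) ≤ α l) ∧
      ∃ ν : D → D → ℝ,
        (∀ l, α l = ∑ d, ν l d) ∧
        (∀ l, ν l l ≤ b l * lam l) ∧
        (∀ l d, αlo l * lam d ≤ ν l d ∧ ν l d ≤ αhi l * lam d))
      ↔ (x ∈ X ∧ ∀ l, ∑ i, h i l (x i) ≤ α l ∧
          α l ≤ b l * lam l + αhi l * (1 - lam l)) := by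
  classical
  have hsum_erase : ∀ l : D, ∑ d ∈ Finset.univ.erase l, lam d = 1 - lam l := by
    intro l
    have := Finset.add_sum_erase Finset.univ lam (Finset.mem_univ l)
    linarith [hlam1 ▸ this]
  constructor
  · rintro ⟨hx, hα, ν, hsum, hνll, hbnd⟩
    refine ⟨hx, fun l => ⟨hα l, ?_⟩⟩
    have h1 : ν l l + ∑ d ∈ Finset.univ.erase l, ν l d = ∑ d, ν l d :=
      Finset.add_sum_erase Finset.univ (ν l) (Finset.mem_univ l)
    have h2 : ∑ d ∈ Finset.univ.erase l, ν l d ≤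
        ∑ d ∈ Finset.univ.erase l, αhi l * lam d :=
      Finset.sum_le_sum fun d _ => (hbnd l d).2
    rw [← Finset.mul_sum, hsum_erase l] at h2
    have := hsum l
    linarith [hνll l]
  · rintro ⟨hx, hαb⟩
    refine ⟨hx, fun l => (hαb l).1, ?_⟩
    have hloα : ∀ l, αlo l ≤ α l := fun l =>
      le_trans ((hlo l).2 ⟨x, hx, rfl⟩) (hαb l).1
    set U : D → ℝ := fun l => b l * lam l + αhi l * (1 - lam l) with hU
    have hUα : ∀ l, α l ≤ U l := fun l => (hαb l).2
    have hLU : ∀ l, αlo l ≤ U l := fun l => le_trans (hloα l) (hUα l)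
    set t : D → ℝ := fun l => if U l = αlo l then 0 else (α l - αlo l) / (U l - αlo l)
      with ht
    have ht01 : ∀ l, 0 ≤ t l ∧ t l ≤ 1 := by
      intro l
      rw [ht]
      dsimp only
      split_ifs with hc
      · exact ⟨le_refl 0, zero_le_one⟩
      · have hpos : 0 < U l - αlo l := lt_of_le_of_ne (by linarith [hLU l]) (by
          intro hcon; exact hc (by linarith))
        refine ⟨div_nonneg (by linarith [hloα l]) hpos.le, ?_⟩
        rw [div_le_one hpos]
        linarith [hUα l]
    have htα : ∀ l, αlo l + t l * (U l - αlo l) = α l := by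
      intro l
      rw [ht]
      dsimp only
      split_ifs with hc
      · have h1 : α l ≤ αlo l := hc ▸ hUα l
        have h2 := hloα l
        linarith
      · rw [div_mul_cancel₀ _ (sub_ne_zero.mpr hc)]
        ring
    refine ⟨fun l d => αlo l * lam d + t l *
      ((if d = l then b l * lam l else αhi l * lam d) - αlo l * lam d), ?_, ?_, ?_⟩
    · intro l
      have hsplit : ∀ f : D → ℝ, ∑ d, f d = f l + ∑ d ∈ Finset.univ.erase l, f d :=
        fun f => (Finset.add_sum_erase Finset.univ f (Finset.mem_univ l)).symm
      rw [hsplit]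
      beta_reduce
      rw [if_pos rfl]
      have hcongr : ∑ d ∈ Finset.univ.erase l, (αlo l * lam d + t l *
          ((if d = l then b l * lam l else αhi l * lam d) - αlo l * lam d)) =
          ∑ d ∈ Finset.univ.erase l, (αlo l * lam d + t l *
          (αhi l * lam d - αlo l * lam d)) := by
        apply Finset.sum_congr rfl
        intro d hd
        rw [if_neg (Finset.ne_of_mem_erase hd)]
      rw [hcongr]
      have hexp : ∑ d ∈ Finset.univ.erase l, (αlo l * lam d + t l *
          (αhi l * lam d - αlo l * lam d)) =
          (αlo l + t l * (αhi l - αlo l)) * ∑ d ∈ Finset.univ.erase l, lam d := by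
        rw [Finset.mul_sum]
        apply Finset.sum_congr rfl
        intro d _
        ring
      rw [hexp, hsum_erase l]
      have h1 : αlo l + t l * (b l * lam l + αhi l * (1 - lam l) - αlo l) = α l := htα l
      linear_combination -h1
    · intro l
      beta_reduce
      rw [if_pos rfl]
      exact (one_split_aux _ _ _ _ (ht01 l).1 (ht01 l).2
        (mul_le_mul_of_nonneg_right (hb l).1 (hlam l).1) le_rfl).2
    · intro l d
      beta_reduce
      by_cases hdl : d = l
      · subst hdl
        rw [if_pos rfl]
        exact one_split_aux _ _ _ _ (ht01 d).1 (ht01 d).2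
          (mul_le_mul_of_nonneg_right (hb d).1 (hlam d).1)
          (mul_le_mul_of_nonneg_right (hb d).2 (hlam d).1)
      · rw [if_neg hdl]
        exact one_split_aux _ _ _ _ (ht01 l).1 (ht01 l).2
          (mul_le_mul_of_nonneg_right (le_trans (hb l).1 (hb l).2) (hlam d).1) le_rfl
end

section
/- (Theorem 3: non-extended realization of the P-split formulation for a two-term disjunction) Let D = {1,2}. Then for every x ∈ ℝⁿ and every λ₁, λ₂ ≥ 0 with λ₁ + λ₂ = 1, the following are equivalent: (i) there exist α = (α^l_s) and ν = (ν^l_{s,d}) such that (x, α, ν, λ) satisfies all remaining constraints of the continuous relaxation of the P-split formulation; (ii) x ∈ X and, for every subset S_p ⊆ {1,…,P}, both Σ_{s∈S_p} Σ_{i∈I_s} h_{i,1}(x_i) ≤ (b₁ − Σ_{s∈{1,…,P}∖S_p} αlo^1_s)·λ₁ + (Σ_{s∈S_p} αhi^1_s)·λ₂ and Σ_{s∈S_p} Σ_{i∈I_s} h_{i,2}(x_i) ≤ (b₂ − Σ_{s∈{1,…,P}∖S_p} αlo^2_s)·λ₂ + (Σ_{s∈S_p} αhi^2_s)·λ₁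 hold. In particular, system (ii) together with λ ∈ {0,1}², λ₁ + λ₂ = 1, is a non-extended realization of the P-split formulation. -/
lemma psplit_aux {P : ℕ} (lo hi g : Fin P → ℝ) (b t0 t1 : ℝ)
    (hlo : ∀ s, lo s ≤ g s) (hhi : ∀ s, g s ≤ hi s)
    (h0 : 0 ≤ t0) (h1 : 0 ≤ t1) (hsum : t0 + t1 = 1)
    (hineq : ∀ Sp : Finset (Fin P),
      ∑ s ∈ Sp, g s ≤ (b - ∑ s ∈ Spᶜ, lo s) * t0 + (∑ s ∈ Sp, hi s) * t1) :
    ∃ ν0 ν1 : Fin P → ℝ, (∀ s, g s = ν0 s + ν1 s) ∧ (∑ s, ν0 s ≤ b * t0) ∧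
      ∀ s, lo s * t0 ≤ ν0 s ∧ ν0 s ≤ hi s * t0 ∧ lo s * t1 ≤ ν1 s ∧ ν1 s ≤ hi s * t1 := by
  refine ⟨fun s => max (lo s * t0) (g s - hi s * t1),
          fun s => g s - max (lo s * t0) (g s - hi s * t1),
          fun s => by ring, ?_, ?_⟩
  · set Sp := Finset.univ.filter (fun s => lo s * t0 < g s - hi s * t1) with hSp
    have hsplit : ∑ s, max (lo s * t0) (g s - hi s * t1)
        = ∑ s ∈ Spᶜ, max (lo s * t0) (g s - hi s * t1)
          + ∑ s ∈ Sp, max (lo s * t0) (g s - hi s * t1) :=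
      (Finset.sum_compl_add_sum Sp _).symm
    have e1 : ∑ s ∈ Sp, max (lo s * t0) (g s - hi s * t1)
        = ∑ s ∈ Sp, (g s - hi s * t1) := by
      refine Finset.sum_congr rfl fun s hs => ?_
      exact max_eq_right (Finset.mem_filter.mp hs).2.le
    have e2 : ∑ s ∈ Spᶜ, max (lo s * t0) (g s - hi s * t1)
        = ∑ s ∈ Spᶜ, lo s * t0 := by
      refine Finset.sum_congr rfl fun s hs => ?_
      have hns : ¬ (lo s * t0 < g s - hi s * t1) := by
        have := Finset.mem_compl.mp hs
        simpa [hSp] using this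
      exact max_eq_left (not_lt.mp hns)
    have key := hineq Sp
    have e3 : ∑ s ∈ Spᶜ, lo s * t0 = (∑ s ∈ Spᶜ, lo s) * t0 := by
      rw [Finset.sum_mul]
    have e4 : ∑ s ∈ Sp, (g s - hi s * t1)
        = ∑ s ∈ Sp, g s - (∑ s ∈ Sp, hi s) * t1 := by
      rw [Finset.sum_sub_distrib, Finset.sum_mul]
    rw [hsplit, e1, e2, e3, e4]
    nlinarith [key]
  · intro s
    dsimp only
    have hls := hlo s
    have hhs := hhi s
    have hlh : lo s ≤ hi s := le_trans hls hhs
    have ehi : hi s * t0 + hi s * t1 = hi s := by rw [← mul_add, hsum, mul_one]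
    have elo : lo s * t0 + lo s * t1 = lo s := by rw [← mul_add, hsum, mul_one]
    refine ⟨le_max_left _ _, ?_, ?_, ?_⟩
    · apply max_le
      · exact mul_le_mul_of_nonneg_right hlh h0
      · linarith
    · have h2 : lo s * t0 ≤ g s - lo s * t1 := by linarith
      have h3 : g s - hi s * t1 ≤ g s - lo s * t1 := by nlinarith [mul_le_mul_of_nonneg_right hlh h1]
      have := max_le h2 h3
      linarith
    · have := le_max_right (lo s * t0) (g s - hi s * t1)
      linarith

/-- **Theorem 3 (non-extended realization of the P-split formulation for a
two-term disjunction).** For D = {1,2} and λ ≥ 0 with λ₁ + λ₂ = 1, the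
existence of auxiliary variables (α, ν) satisfying the remaining constraints
of the continuous relaxation of the P-split formulation is equivalent to the
non-extended system of 2·2^P inequalities indexed by subsets S_p ⊆ {1,…,P}. -/
theorem two_term_psplit_nonextended
    {n : ℕ} (hn : 1 ≤ n)
    (b : Fin 2 → ℝ) (h : Fin n → Fin 2 → ℝ → ℝ)
    (hconv : ∀ i l, ConvexOn ℝ Set.univ (h i l))
    (X : Set (Fin n → ℝ)) (hXne : X.Nonempty) (hXconv : Convex ℝ X)
    (hXcomp : IsCompact X)
    (hdisjne : ∀ l : Fin 2, ∃ x ∈ X, ∑ i, h i l (x i) ≤ b l)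
    {P : ℕ} (I : Fin P → Finset (Fin n))
    (hIne : ∀ s, (I s).Nonempty)
    (hpart : ∀ i : Fin n, ∃! s, i ∈ I s)
    (αlo αhi : Fin 2 → Fin P → ℝ)
    (hlo : ∀ l s, IsLeast ((fun x => ∑ i ∈ I s, h i l (x i)) '' X) (αlo l s))
    (hhi : ∀ l s, IsGreatest ((fun x => ∑ i ∈ I s, h i l (x i)) '' X) (αhi l s))
    (x : Fin n → ℝ) (lam : Fin 2 → ℝ)
    (hlam : ∀ l, 0 ≤ lam l) (hlam1 : lam 0 + lam 1 = 1) :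
    (∃ (α : Fin 2 → Fin P → ℝ) (ν : Fin 2 → Fin P → Fin 2 → ℝ),
        x ∈ X ∧
        (∀ l s, α l s = ν l s 0 + ν l s 1) ∧
        (∀ l, ∑ s, ν l s l ≤ b l * lam l) ∧
        (∀ l s d, αlo l s * lam d ≤ ν l s d ∧ ν l s d ≤ αhi l s * lam d) ∧
        (∀ l s, ∑ i ∈ I s, h i l (x i) ≤ α l s))
      ↔ (x ∈ X ∧ ∀ (Sp : Finset (Fin P)) (l : Fin 2),
          ∑ s ∈ Sp, ∑ i ∈ I s, h i l (x i) ≤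
            (b l - ∑ s ∈ Spᶜ, αlo l s) * lam l
              + (∑ s ∈ Sp, αhi l s) * lam (1 - l)) := by
  constructor
  · rintro ⟨α, ν, hx, hsum, hb, hbd, hα⟩
    refine ⟨hx, fun Sp l => ?_⟩
    have h1 : ∑ s ∈ Sp, ν l s l ≤ (b l - ∑ s ∈ Spᶜ, αlo l s) * lam l := by
      have h2 : ∑ s ∈ Spᶜ, ν l s l + ∑ s ∈ Sp, ν l s l = ∑ s, ν l s l :=
        Finset.sum_compl_add_sum Sp _
      have h3 : ∑ s ∈ Spᶜ, αlo l s * lam l ≤ ∑ s ∈ Spᶜ, ν l s l :=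
        Finset.sum_le_sum fun s _ => (hbd l s l).1
      have h4 := hb l
      have h5 : (∑ s ∈ Spᶜ, αlo l s) * lam l = ∑ s ∈ Spᶜ, αlo l s * lam l := by
        rw [Finset.sum_mul]
      rw [sub_mul, h5]
      linarith
    have h6 : ∑ s ∈ Sp, ν l s (1 - l) ≤ (∑ s ∈ Sp, αhi l s) * lam (1 - l) := by
      rw [Finset.sum_mul]
      exact Finset.sum_le_sum fun s _ => (hbd l s (1 - l)).2
    have h7 : ∀ s, α l s = ν l s l + ν l s (1 - l) := by
      intro s
      fin_cases l <;> simp [hsum, add_comm]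
    calc ∑ s ∈ Sp, ∑ i ∈ I s, h i l (x i)
        ≤ ∑ s ∈ Sp, α l s := Finset.sum_le_sum fun s _ => hα l s
      _ = ∑ s ∈ Sp, ν l s l + ∑ s ∈ Sp, ν l s (1 - l) := by
          rw [← Finset.sum_add_distrib]
          exact Finset.sum_congr rfl fun s _ => h7 s
      _ ≤ _ := add_le_add h1 h6
  · rintro ⟨hx, hineq⟩
    have hg : ∀ l s, αlo l s ≤ (∑ i ∈ I s, h i l (x i)) ∧
        (∑ i ∈ I s, h i l (x i)) ≤ αhi l s :=
      fun l s => ⟨(hlo l s).2 ⟨x, hx, rfl⟩, (hhi l s).2 ⟨x, hx, rfl⟩⟩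
    obtain ⟨ν00, ν01, he0, hb0, hbd0⟩ :=
      psplit_aux (αlo 0) (αhi 0) (fun s => ∑ i ∈ I s, h i 0 (x i)) (b 0) (lam 0) (lam 1)
        (fun s => (hg 0 s).1) (fun s => (hg 0 s).2) (hlam 0) (hlam 1) hlam1
        (fun Sp => by simpa using hineq Sp 0)
    obtain ⟨ν10, ν11, he1, hb1, hbd1⟩ :=
      psplit_aux (αlo 1) (αhi 1) (fun s => ∑ i ∈ I s, h i 1 (x i)) (b 1) (lam 1) (lam 0)
        (fun s => (hg 1 s).1) (fun s => (hg 1 s).2) (hlam 1) (hlam 0) (by linarith)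
        (fun Sp => by simpa using hineq Sp 1)
    refine ⟨fun l s => ∑ i ∈ I s, h i l (x i),
      fun l s d => if l = 0 then (if d = 0 then ν00 s else ν01 s)
        else (if d = 0 then ν11 s else ν10 s),
      hx, ?_, ?_, ?_, fun l s => le_rfl⟩
    · intro l s
      fin_cases l
      · simpa using he0 s
      · simp
        linarith [he1 s]
    · intro l
      fin_cases l
      · simpa using hb0
      · simpa using hb1
    · intro l s d
      fin_cases l <;> fin_cases d <;> simp
      · exact ⟨(hbd0 s).1, (hbd0 s).2.1⟩
      · exact ⟨(hbd0 s).2.2.1, (hbd0 s).2.2.2⟩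
      · exact ⟨(hbd1 s).2.2.1, (hbd1 s).2.2.2⟩
      · exact ⟨(hbd1 s).1, (hbd1 s).2.1⟩
end

section
/- (Corollary 1: refining a split tightens the relaxation under independent bounds) Let D = {1,2}. For a partition I = (I_1,…,I_P) of {1,…,n} into nonempty sets, let R(I) ⊆ ℝⁿ × ℝ² denote the non-extended P-split relaxation: the set of (x, λ₁, λ₂) with x ∈ X, λ₁, λ₂ ≥ 0, λ₁ + λ₂ = 1, such that for every subset S_p ⊆ {1,…,P} and each l ∈ {1,2} (with l' the other index), Σ_{s∈S_p} Σ_{i∈I_s} h_{i,l}(x_i) ≤ (b_l − Σ_{s∉S_p} αlo^l_s(I))·λ_l + (Σ_{s∈S_p} αhi^l_s(I))·λ_{l'}. Let the partition J be obtained from I by splitting one block I_t into two nonempty blocks I_t' and I_t'' (so J has P+1 blocks). Assume the bounds on the split block are independent: for each l ∈ {1,2}, min_{x∈X} Σ_{i∈I_t} h_{i,l}(x_i) = min_{x∈X} Σ_{i∈I_t'} h_{i,l}(x_i) + min_{x∈X} Σ_{i∈I_t''} h_{i,l}(x_i), and the analogous equality holds for the maxima. Then R(J) ⊆ R(I), i.e.,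 the (P+1)-split relaxation is always as tight or tighter than the corresponding P-split relaxation. -/
/-- Lower bound αlo for the partial sum over a block `T` of the constraint of
disjunct `l` (the minimum over X, attained since X is compact and the
functions are continuous). -/
noncomputable def blockLo {n : ℕ} (X : Set (Fin n → ℝ))
    (h : Fin n → Fin 2 → ℝ → ℝ) (l : Fin 2) (T : Finset (Fin n)) : ℝ :=
  sInf ((fun x => ∑ i ∈ T, h i l (x i)) '' X)

/-- Upper bound αhi for the partial sum over a block `T` of the constraint of
disjunct `l` (the maximum over X). -/
noncomputable def blockHi {n : ℕ} (X : Set (Fin n → ℝ))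
    (h : Fin n → Fin 2 → ℝ → ℝ) (l : Fin 2) (T : Finset (Fin n)) : ℝ :=
  sSup ((fun x => ∑ i ∈ T, h i l (x i)) '' X)

/-- The non-extended P-split relaxation R(I) of a two-term disjunction,
for a partition given by blocks `I s`, `s : Fin P`. -/
def splitRelax {n : ℕ} (X : Set (Fin n → ℝ)) (h : Fin n → Fin 2 → ℝ → ℝ)
    (b : Fin 2 → ℝ) {P : ℕ} (I : Fin P → Finset (Fin n)) :
    Set ((Fin n → ℝ) × (Fin 2 → ℝ)) :=
  {p | p.1 ∈ X ∧ (∀ l, 0 ≤ p.2 l) ∧ p.2 0 + p.2 1 = 1 ∧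
    ∀ (Sp : Finset (Fin P)) (l : Fin 2),
      ∑ s ∈ Sp, ∑ i ∈ I s, h i l (p.1 i) ≤
        (b l - ∑ s ∈ Spᶜ, blockLo X h l (I s)) * p.2 l
          + (∑ s ∈ Sp, blockHi X h l (I s)) * p.2 (1 - l)}

/-- **Corollary 1 (refining a split tightens the relaxation under independent
bounds).** If the partition J is obtained from I by splitting the block I_t
into two nonempty blocks whose bounds are independent, then the (P+1)-split
relaxation R(J) is contained in the P-split relaxation R(I). -/
theorem refined_split_tighter
    {n : ℕ} (hn : 1 ≤ n)
    (b : Fin 2 → ℝ) (h : Fin n → Fin 2 → ℝ → ℝ)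
    (hconv : ∀ i l, ConvexOn ℝ Set.univ (h i l))
    (X : Set (Fin n → ℝ)) (hXne : X.Nonempty) (hXconv : Convex ℝ X)
    (hXcomp : IsCompact X)
    (hdisjne : ∀ l : Fin 2, ∃ x ∈ X, ∑ i, h i l (x i) ≤ b l)
    {P : ℕ} (I : Fin P → Finset (Fin n))
    (hIne : ∀ s, (I s).Nonempty)
    (hpart : ∀ i : Fin n, ∃! s, i ∈ I s)
    (J : Fin (P + 1) → Finset (Fin n))
    (hJne : ∀ s, (J s).Nonempty)
    (hJpart : ∀ i : Fin n, ∃! s, i ∈ J s)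
    (t : Fin P)
    (hsame : ∀ s : Fin P, s ≠ t → J s.castSucc = I s)
    (hdisj : Disjoint (J t.castSucc) (J (Fin.last P)))
    (hsplit : I t = J t.castSucc ∪ J (Fin.last P))
    (hindLo : ∀ l : Fin 2,
      blockLo X h l (I t) = blockLo X h l (J t.castSucc) + blockLo X h l (J (Fin.last P)))
    (hindHi : ∀ l : Fin 2,
      blockHi X h l (I t) = blockHi X h l (J t.castSucc) + blockHi X h l (J (Fin.last P))) :
    splitRelax X h b J ⊆ splitRelax X h b I := by

  intro p hp
  obtain ⟨hx, hl, hsum1, hcon⟩ := hp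
  refine ⟨hx, hl, hsum1, ?_⟩
  intro Sp l
  set F : Finset (Fin P) → Finset (Fin (P + 1)) :=
    fun S => S.image Fin.castSucc ∪ (if t ∈ S then {Fin.last P} else ∅) with hF
  have hmemc : ∀ (S : Finset (Fin P)) (s' : Fin P), Fin.castSucc s' ∈ F S ↔ s' ∈ S := by
    intro S s'
    simp only [hF, Finset.mem_union, Finset.mem_image]
    constructor
    · rintro (⟨a, ha, hab⟩ | hmem)
      · rwa [← Fin.castSucc_injective _ hab]
      · by_cases ht : t ∈ S
        · simp [ht] at hmem
        · simp [ht] at hmem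
    · intro hs; exact Or.inl ⟨s', hs, rfl⟩
  have hmeml : ∀ (S : Finset (Fin P)), Fin.last P ∈ F S ↔ t ∈ S := by
    intro S
    simp only [hF, Finset.mem_union, Finset.mem_image]
    constructor
    · rintro (⟨a, ha, hab⟩ | hmem)
      · exact absurd hab (Fin.castSucc_lt_last a).ne
      · by_cases ht : t ∈ S
        · exact ht
        · simp [ht] at hmem
    · intro ht; simp [ht]
  have hcompl : ∀ S : Finset (Fin P), (F S)ᶜ = F Sᶜ := by
    intro S
    ext s
    refine Fin.lastCases ?_ ?_ s
    · simp [Finset.mem_compl, hmeml]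
    · intro s'
      simp [Finset.mem_compl, hmemc]
  have hsumF : ∀ (g : Finset (Fin n) → ℝ),
      g (I t) = g (J t.castSucc) + g (J (Fin.last P)) →
      ∀ S : Finset (Fin P), ∑ s ∈ F S, g (J s) = ∑ s ∈ S, g (I s) := by
    intro g hg S
    have hinj : ∀ a ∈ S, ∀ c ∈ S, Fin.castSucc a = Fin.castSucc c → a = c :=
      fun a _ c _ hac => Fin.castSucc_injective _ hac
    by_cases ht : t ∈ S
    · have hFS : F S = insert (Fin.last P) (S.image Fin.castSucc) := by
        simp only [hF, ht, if_pos]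
        rw [Finset.union_comm, ← Finset.insert_eq]
      have hnot : Fin.last P ∉ S.image Fin.castSucc := by
        simp only [Finset.mem_image, not_exists]
        intro a
        rintro ⟨_, hab⟩
        exact absurd hab (Fin.castSucc_lt_last a).ne
      rw [hFS, Finset.sum_insert hnot, Finset.sum_image hinj]
      rw [← Finset.add_sum_erase _ _ ht, ← Finset.add_sum_erase _ (fun s => g (I s)) ht]
      have herase : ∑ s ∈ S.erase t, g (J s.castSucc) = ∑ s ∈ S.erase t, g (I s) :=
        Finset.sum_congr rfl fun s hs => by rw [hsame s (Finset.ne_of_mem_erase hs)]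
      rw [herase, hg]
      ring
    · have hFS : F S = S.image Fin.castSucc := by
        simp only [hF, ht, if_neg, Finset.union_empty, ite_false]
      rw [hFS, Finset.sum_image hinj]
      exact Finset.sum_congr rfl fun s hs => by
        rw [hsame s (fun hst => ht (hst ▸ hs))]
  have e1 := hsumF (fun T => ∑ i ∈ T, h i l (p.1 i))
    (by simp only [hsplit, Finset.sum_union hdisj]) Sp
  have e2 := hsumF (blockLo X h l) (hindLo l) Spᶜ
  have e3 := hsumF (blockHi X h l) (hindHi l) Sp
  have key := hcon (F Sp) l
  rw [hcompl Sp, e1, e2, e3] at key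
  exact key
end

section
/- (Valid tight bounds for the auxiliary variables in the illustrative example) Let x ∈ ℝ⁴ satisfy the disjunction (Σ_{i=1}^4 x_i² ≤ 1) ∨ (Σ_{i=1}^4 (3 − x_i)² ≤ 1). Then for every nonempty subset I ⊆ {1,2,3,4}: Σ_{i∈I} x_i² ≤ (√(9·|I|) + 1)² and Σ_{i∈I} (3 − x_i)² ≤ (√(9·|I|) + 1)². Moreover these bounds are tight: for every nonempty I ⊆ {1,2,3,4} there exists x ∈ ℝ⁴ satisfying the disjunction with Σ_{i∈I} x_i² = (√(9·|I|) + 1)², and likewise there exists x satisfying the disjunction with Σ_{i∈I} (3 − x_i)² = (√(9·|I|) + 1)². -/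
private lemma key_bound (x : Fin 4 → ℝ) (h : ∑ i, (x i) ^ 2 ≤ 1)
    (I : Finset (Fin 4)) :
    ∑ i ∈ I, (3 - x i) ^ 2 ≤ (Real.sqrt (9 * I.card) + 1) ^ 2 := by
  set k : ℝ := (I.card : ℝ) with hk
  have hk0 : (0:ℝ) ≤ k := by positivity
  have hs : Real.sqrt (9 * k) = 3 * Real.sqrt k := by
    rw [show (9:ℝ) * k = 3^2 * k by ring, Real.sqrt_mul (by positivity), Real.sqrt_sq (by norm_num)]
  have hQ : ∑ i ∈ I, (x i) ^ 2 ≤ 1 := by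
    refine le_trans ?_ h
    exact Finset.sum_le_sum_of_subset_of_nonneg (Finset.subset_univ I)
      (fun i _ _ => sq_nonneg _)
  have hCS : (∑ i ∈ I, x i) ^ 2 ≤ k * ∑ i ∈ I, (x i) ^ 2 := by
    simpa using sq_sum_le_card_mul_sum_sq (s := I) (f := x)
  have hQ0 : (0:ℝ) ≤ ∑ i ∈ I, (x i) ^ 2 :=
    Finset.sum_nonneg fun i _ => sq_nonneg _
  have hS2 : (∑ i ∈ I, x i) ^ 2 ≤ k := le_trans hCS (by nlinarith)
  have hSlow : -(∑ i ∈ I, x i) ≤ Real.sqrt k := by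
    have := Real.sqrt_le_sqrt hS2
    rw [Real.sqrt_sq_eq_abs] at this
    linarith [neg_abs_le (∑ i ∈ I, x i)]
  have hsq : (Real.sqrt k) ^ 2 = k := Real.sq_sqrt hk0
  have expand : ∑ i ∈ I, (3 - x i) ^ 2
      = 9 * k - 6 * (∑ i ∈ I, x i) + ∑ i ∈ I, (x i) ^ 2 := by
    have : ∀ i ∈ I, (3 - x i) ^ 2 = 9 - 6 * x i + (x i) ^ 2 := fun i _ => by ring
    rw [Finset.sum_congr rfl this, Finset.sum_add_distrib, Finset.sum_sub_distrib,
      ← Finset.mul_sum, Finset.sum_const, nsmul_eq_mul, ← hk]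
    ring
  rw [expand, hs]
  nlinarith [Real.sqrt_nonneg k]

private lemma key_comp (I : Finset (Fin 4)) (hI : I.Nonempty) :
    (I.card : ℝ) * (3 + 1 / Real.sqrt (I.card : ℝ)) ^ 2
      = (Real.sqrt (9 * I.card) + 1) ^ 2 := by
  set k : ℝ := (I.card : ℝ) with hk
  have hkpos : (0:ℝ) < k := by
    have := Finset.card_pos.mpr hI
    positivity
  have hspos : 0 < Real.sqrt k := Real.sqrt_pos.mpr hkpos
  have hsq : (Real.sqrt k) ^ 2 = k := Real.sq_sqrt hkpos.le
  have hs : Real.sqrt (9 * k) = 3 * Real.sqrt k := by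
    rw [show (9:ℝ) * k = 3^2 * k by ring, Real.sqrt_mul (by positivity), Real.sqrt_sq (by norm_num)]
  rw [hs, ← hsq]
  field_simp
  rw [Real.sqrt_sq hspos.le]

private lemma sum_ite_one (I : Finset (Fin 4)) (hI : I.Nonempty) (c : ℝ)
    (hc : c ^ 2 = 1 / (I.card : ℝ)) :
    ∑ i : Fin 4, (if i ∈ I then c else 0) ^ 2 = 1 := by
  have hkpos : (0:ℝ) < (I.card : ℝ) := by
    have := Finset.card_pos.mpr hI
    positivity
  have : ∀ i : Fin 4, (if i ∈ I then c else 0) ^ 2 = if i ∈ I then c ^ 2 else 0 := by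
    intro i; split <;> simp
  simp only [this, Finset.sum_ite_mem, Finset.univ_inter, Finset.sum_const, nsmul_eq_mul, hc]
  field_simp

/-- **Valid tight bounds for the auxiliary variables in the illustrative
example.** Any x ∈ ℝ⁴ satisfying the disjunction
(Σ x_i² ≤ 1) ∨ (Σ (3 − x_i)² ≤ 1) obeys, for every nonempty I ⊆ {1,…,4},
Σ_{i∈I} x_i² ≤ (√(9|I|)+1)² and Σ_{i∈I} (3 − x_i)² ≤ (√(9|I|)+1)²,
and these bounds are attained by points satisfying the disjunction. -/
theorem illustrative_example_bounds
    (x : Fin 4 → ℝ)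
    (hx : (∑ i, (x i) ^ 2 ≤ 1) ∨ (∑ i, (3 - x i) ^ 2 ≤ 1)) :
    (∀ I : Finset (Fin 4), I.Nonempty →
        ∑ i ∈ I, (x i) ^ 2 ≤ (Real.sqrt (9 * I.card) + 1) ^ 2) ∧
    (∀ I : Finset (Fin 4), I.Nonempty →
        ∑ i ∈ I, (3 - x i) ^ 2 ≤ (Real.sqrt (9 * I.card) + 1) ^ 2) ∧
    (∀ I : Finset (Fin 4), I.Nonempty →
        ∃ y : Fin 4 → ℝ,
          ((∑ i, (y i) ^ 2 ≤ 1) ∨ (∑ i, (3 - y i) ^ 2 ≤ 1)) ∧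
          ∑ i ∈ I, (y i) ^ 2 = (Real.sqrt (9 * I.card) + 1) ^ 2) ∧
    (∀ I : Finset (Fin 4), I.Nonempty →
        ∃ y : Fin 4 → ℝ,
          ((∑ i, (y i) ^ 2 ≤ 1) ∨ (∑ i, (3 - y i) ^ 2 ≤ 1)) ∧
          ∑ i ∈ I, (3 - y i) ^ 2 = (Real.sqrt (9 * I.card) + 1) ^ 2) := by
  -- general bound for both branches
  have keyA : ∀ z : Fin 4 → ℝ, (∑ i, (z i) ^ 2 ≤ 1) → ∀ I : Finset (Fin 4),
      ∑ i ∈ I, (z i) ^ 2 ≤ (Real.sqrt (9 * I.card) + 1) ^ 2 := by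
    intro z hz I
    have hQ : ∑ i ∈ I, (z i) ^ 2 ≤ 1 := by
      refine le_trans ?_ hz
      exact Finset.sum_le_sum_of_subset_of_nonneg (Finset.subset_univ I)
        (fun i _ _ => sq_nonneg _)
    nlinarith [Real.sqrt_nonneg (9 * (I.card : ℝ))]
  have keyB : ∀ z : Fin 4 → ℝ, (∑ i, (3 - z i) ^ 2 ≤ 1) → ∀ I : Finset (Fin 4),
      ∑ i ∈ I, (z i) ^ 2 ≤ (Real.sqrt (9 * I.card) + 1) ^ 2 := by
    intro z hz I
    have := key_bound (fun i => 3 - z i) hz I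
    simpa using this
  refine ⟨?_, ?_, ?_, ?_⟩
  · intro I _
    rcases hx with h | h
    · exact keyA x h I
    · exact keyB x h I
  · intro I _
    rcases hx with h | h
    · exact key_bound x h I
    · exact keyA (fun i => 3 - x i) h I
  · -- attainment for ∑ y² : y_i = 3 + 1/√k on I, 3 off I; ball around 3
    intro I hI
    set k : ℝ := (I.card : ℝ) with hk
    have hkpos : (0:ℝ) < k := by
      have := Finset.card_pos.mpr hI
      positivity
    have hspos : 0 < Real.sqrt k := Real.sqrt_pos.mpr hkpos
    have hsq : (Real.sqrt k) ^ 2 = k := Real.sq_sqrt hkpos.le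
    refine ⟨fun i => 3 + (if i ∈ I then 1 / Real.sqrt k else 0), Or.inr ?_, ?_⟩
    · have : ∑ i : Fin 4,
          (3 - (3 + (if i ∈ I then 1 / Real.sqrt k else 0))) ^ 2
          = ∑ i : Fin 4, (if i ∈ I then -(1 / Real.sqrt k) else 0) ^ 2 := by
        apply Finset.sum_congr rfl
        intro i _; split <;> ring
      rw [this, sum_ite_one I hI (-(1 / Real.sqrt k)) (by rw [neg_sq, div_pow, one_pow, hsq])]
    · have : ∑ i ∈ I, (3 + (if i ∈ I then 1 / Real.sqrt k else 0)) ^ 2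
          = ∑ i ∈ I, (3 + 1 / Real.sqrt k) ^ 2 := by
        apply Finset.sum_congr rfl
        intro i hi; simp [hi]
      rw [this, Finset.sum_const, nsmul_eq_mul]
      exact key_comp I hI
  · intro I hI
    set k : ℝ := (I.card : ℝ) with hk
    have hkpos : (0:ℝ) < k := by
      have := Finset.card_pos.mpr hI
      positivity
    have hspos : 0 < Real.sqrt k := Real.sqrt_pos.mpr hkpos
    have hsq : (Real.sqrt k) ^ 2 = k := Real.sq_sqrt hkpos.le
    refine ⟨fun i => if i ∈ I then -(1 / Real.sqrt k) else 0, Or.inl ?_, ?_⟩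
    · exact le_of_eq (sum_ite_one I hI (-(1 / Real.sqrt k)) (by rw [neg_sq, div_pow, one_pow, hsq]))
    · have : ∑ i ∈ I, (3 - (if i ∈ I then -(1 / Real.sqrt k) else 0)) ^ 2
          = ∑ i ∈ I, (3 + 1 / Real.sqrt k) ^ 2 := by
        apply Finset.sum_congr rfl
        intro i hi; simp [hi, sub_neg_eq_add]
      rw [this, Finset.sum_const, nsmul_eq_mul]
      exact key_comp I hI
end
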